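/- arXiv:1907.07351 — 5 statements merged into one kernel-verified Lean document; each statement's English description precedes it below -/
import Mathlib

section
/- Let 0 < θ < π/2 and let γ : [0,1] → ℂ be a continuous map with γ(0) = p for some real p ≥ 0 and γ(1) = q·e^{iθ} for some real q ≥ 0 (i.e., the endpoints of γ lie on the two bounding rays of the sector). If there exists t ∈ [0,1] with |γ(t)| > 1, then the total variation of γ on [0,1] is strictly greater than sin θ. -/
open Complex

lemma exp_neg_theta (θ : ℝ) :
    Complex.exp (-(θ * Complex.I)) = (Real.cos θ : ℂ) - (Real.sin θ : ℂ) * Complex.I := by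
  rw [show -((θ:ℂ) * Complex.I) = ((-θ : ℝ) : ℂ) * Complex.I by push_cast; ring]
  apply Complex.ext
  · rw [Complex.exp_ofReal_mul_I_re]; simp [Complex.cos_ofReal_re]
  · rw [Complex.exp_ofReal_mul_I_im]; simp [Complex.sin_ofReal_re]

-- key real inequality: |Im z| + |Im (e^{-iθ} z)| ≥ |z| sin θ
lemma key_im (θ : ℝ) (z : ℂ) :
    ‖z‖ * Real.sin θ ≤ |z.im| + |(Complex.exp (-(θ * Complex.I)) * z).im| := by
  set r := ‖z‖ with hr
  set w := Complex.exp (-(θ * Complex.I)) * z with hw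
  have hre : w.re = Real.cos θ * z.re + Real.sin θ * z.im := by
    rw [hw, exp_neg_theta]
    simp [Complex.mul_re, Complex.sub_re, Complex.sub_im, Complex.mul_im, Complex.cos_ofReal_re, Complex.sin_ofReal_re]
    try ring
  have him : w.im = Real.cos θ * z.im - Real.sin θ * z.re := by
    rw [hw, exp_neg_theta]
    simp [Complex.mul_re, Complex.sub_re, Complex.sub_im, Complex.mul_im, Complex.cos_ofReal_re, Complex.sin_ofReal_re]
    try ring
  have habsw : ‖w‖ = r := by
    rw [hw, norm_mul, Complex.norm_exp]
    simp [hr]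
  have hid : z.im * w.re - z.re * w.im = r ^ 2 * Real.sin θ := by
    rw [hre, him, hr, Complex.sq_norm, Complex.normSq_apply]; ring
  have hwre : |w.re| ≤ r := habsw ▸ Complex.abs_re_le_norm w
  have hzre : |z.re| ≤ r := Complex.abs_re_le_norm z
  have hr0 : 0 ≤ r := hr ▸ norm_nonneg z
  have e1 : z.im * w.re ≤ |z.im| * r := by
    calc z.im * w.re ≤ |z.im * w.re| := le_abs_self _
      _ = |z.im| * |w.re| := abs_mul _ _
      _ ≤ |z.im| * r := by gcongr
  have e2 : -(z.re * w.im) ≤ r * |w.im| := by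
    calc -(z.re * w.im) ≤ |z.re * w.im| := neg_le_abs _
      _ = |z.re| * |w.im| := abs_mul _ _
      _ ≤ r * |w.im| := by gcongr
  have h1 : r ^ 2 * Real.sin θ ≤ |z.im| * r + r * |w.im| := by
    rw [← hid]; linarith
  rcases eq_or_lt_of_le hr0 with h | h
  · rw [← h, zero_mul]; positivity
  · nlinarith [h1]

/-- Let `0 < θ < π/2` and let `γ : [0,1] → ℂ` be continuous with endpoints on the two
bounding rays of the unit sector of angle `θ`. If some point of `γ` lies strictly outside
the unit disk, then the length of `γ` exceeds `sin θ`. -/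
theorem length_gt_sin_of_point_outside_sector (θ : ℝ)
    (hθ0 : 0 < θ) (hθ : θ < Real.pi / 2)
    (γ : ℝ → ℂ) (hcont : ContinuousOn γ (Set.Icc 0 1))
    (p q : ℝ) (hp : 0 ≤ p) (hq : 0 ≤ q)
    (h0 : γ 0 = (p : ℂ)) (h1 : γ 1 = (q : ℂ) * Complex.exp (θ * Complex.I))
    (hX : ∃ t ∈ Set.Icc (0 : ℝ) 1, 1 < ‖γ t‖) :
    ENNReal.ofReal (Real.sin θ) < eVariationOn γ (Set.Icc 0 1) := by
  obtain ⟨t, ht, hzt⟩ := hX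
  set z := γ t with hz
  have hsinpos : 0 < Real.sin θ :=
    Real.sin_pos_of_pos_of_lt_pi hθ0 (hθ.trans (by linarith [Real.pi_pos]))
  have hd1 : |z.im| ≤ dist (γ 0) (γ t) := by
    rw [h0, Complex.dist_eq]
    calc |z.im| = |((p:ℂ) - z).im| := by simp
      _ ≤ ‖(p:ℂ) - z‖ := Complex.abs_im_le_norm _
  have hd2 : |(Complex.exp (-(θ * Complex.I)) * z).im| ≤ dist (γ t) (γ 1) := by
    rw [h1, Complex.dist_eq]
    have heq : ‖z - (q:ℂ) * Complex.exp (θ * Complex.I)‖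
        = ‖Complex.exp (-(θ * Complex.I)) * z - (q:ℂ)‖ := by
      rw [show Complex.exp (-(θ * Complex.I)) * z - (q:ℂ)
          = Complex.exp (-(θ * Complex.I)) * (z - (q:ℂ) * Complex.exp (θ * Complex.I)) by
        rw [mul_sub, ← mul_assoc, mul_comm (Complex.exp _) ((q:ℂ)), mul_assoc,
          ← Complex.exp_add]
        simp]
      rw [norm_mul, Complex.norm_exp]
      simp
    rw [heq]
    calc |(Complex.exp (-(θ * Complex.I)) * z).im|
        = |(Complex.exp (-(θ * Complex.I)) * z - (q:ℂ)).im| := by simp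
      _ ≤ _ := Complex.abs_im_le_norm _
  have hkey : Real.sin θ < dist (γ 0) (γ t) + dist (γ t) (γ 1) := by
    have := key_im θ z
    nlinarith [hzt, hsinpos]
  have hmain : ENNReal.ofReal (dist (γ 0) (γ t)) + ENNReal.ofReal (dist (γ t) (γ 1))
      ≤ eVariationOn γ (Set.Icc 0 1) := by
    set u : ℕ → ℝ := fun n => if n = 0 then 0 else if n = 1 then t else 1 with hu
    have hmono : Monotone u := by
      intro a b hab
      simp only [hu]
      split_ifs <;> first | rfl | omega | linarith [ht.1, ht.2]
    have hmem : ∀ i, u i ∈ Set.Icc (0:ℝ) 1 := by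
      intro i
      simp only [hu]
      split_ifs
      · exact ⟨le_refl _, zero_le_one⟩
      · exact ht
      · exact ⟨zero_le_one, le_refl _⟩
    have hle := eVariationOn.sum_le (f := γ) (n := 2) hmono hmem
    have hsum : ∑ i ∈ Finset.range 2, edist (γ (u (i+1))) (γ (u i))
        = edist (γ t) (γ 0) + edist (γ 1) (γ t) := by
      rw [Finset.sum_range_succ, Finset.sum_range_one]
      simp [hu]
    rw [hsum] at hle
    calc ENNReal.ofReal (dist (γ 0) (γ t)) + ENNReal.ofReal (dist (γ t) (γ 1))
        = edist (γ t) (γ 0) + edist (γ 1) (γ t) := by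
          rw [edist_dist, edist_dist, dist_comm (γ t) (γ 0), dist_comm (γ 1) (γ t)]
      _ ≤ _ := hle
  refine lt_of_lt_of_le ?_ hmain
  rw [← ENNReal.ofReal_add dist_nonneg dist_nonneg]
  exact (ENNReal.ofReal_lt_ofReal_iff_of_nonneg hsinpos.le).mpr hkey
end

section
/- Let 0 < θ < π/2 and let γ : [0,1] → ℂ be a continuous map with γ(0) = p for some real p ≥ 0 and γ(1) = q·e^{iθ} for some real q ≥ 0. If there exists t ∈ [0,1] and a real r > 1 with γ(t) = r·e^{iθ/2} (a point beyond the unit circle on the angle bisector of the sector), then the total variation of γ on [0,1] is strictly greater than 2·sin(θ/2). -/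
open Complex

/-- Let `0 < θ < π/2` and let `γ : [0,1] → ℂ` be continuous with endpoints on the two
bounding rays of the unit sector of angle `θ`. If some point of `γ` lies beyond the unit
circle on the angle bisector of the sector, then the length of `γ` exceeds `2·sin(θ/2)`. -/
theorem length_gt_chord_of_bisector_point_outside (θ : ℝ)
    (hθ0 : 0 < θ) (hθ : θ < Real.pi / 2)
    (γ : ℝ → ℂ) (hcont : ContinuousOn γ (Set.Icc 0 1))
    (p q : ℝ) (hp : 0 ≤ p) (hq : 0 ≤ q)
    (h0 : γ 0 = (p : ℂ)) (h1 : γ 1 = (q : ℂ) * Complex.exp (θ * Complex.I))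
    (hX : ∃ t ∈ Set.Icc (0 : ℝ) 1, ∃ r : ℝ, 1 < r ∧
      γ t = (r : ℂ) * Complex.exp ((θ / 2 : ℝ) * Complex.I)) :
    ENNReal.ofReal (2 * Real.sin (θ / 2)) < eVariationOn γ (Set.Icc 0 1) := by
  obtain ⟨t, ht, r, hr, hγt⟩ := hX
  have hsin : 0 < Real.sin (θ / 2) := by
    apply Real.sin_pos_of_pos_of_lt_pi (by linarith)
    have := Real.pi_pos
    linarith
  have hrs : 0 ≤ r * Real.sin (θ / 2) := mul_nonneg (by linarith) hsin.le
  -- distance from γ 0 to γ t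
  have hd1 : r * Real.sin (θ / 2) ≤ dist (γ 0) (γ t) := by
    rw [dist_eq, h0, hγt]
    have him : ((p : ℂ) - (r : ℂ) * Complex.exp ((θ / 2 : ℝ) * Complex.I)).im
        = -(r * Real.sin (θ / 2)) := by
      rw [Complex.sub_im, Complex.im_ofReal_mul, Complex.exp_ofReal_mul_I_im,
        Complex.ofReal_im]; ring
    calc r * Real.sin (θ / 2)
        ≤ |((p : ℂ) - (r : ℂ) * Complex.exp ((θ / 2 : ℝ) * Complex.I)).im| := by
          rw [him, abs_neg, _root_.abs_of_nonneg hrs]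
      _ ≤ ‖(p : ℂ) - (r : ℂ) * Complex.exp ((θ / 2 : ℝ) * Complex.I)‖ :=
          Complex.abs_im_le_norm _
  -- distance from γ t to γ 1
  have hd2 : r * Real.sin (θ / 2) ≤ dist (γ t) (γ 1) := by
    rw [dist_eq, hγt, h1]
    have key : ‖((r : ℂ) * Complex.exp ((θ / 2 : ℝ) * Complex.I)
        - (q : ℂ) * Complex.exp (θ * Complex.I)) * Complex.exp ((-θ : ℝ) * Complex.I)‖
        = ‖(r : ℂ) * Complex.exp ((θ / 2 : ℝ) * Complex.I)
        - (q : ℂ) * Complex.exp (θ * Complex.I)‖ := by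
      rw [norm_mul, Complex.norm_exp_ofReal_mul_I, mul_one]
    rw [← key]
    have e1 : Complex.exp (((θ / 2 : ℝ) : ℂ) * Complex.I) * Complex.exp (((-θ : ℝ) : ℂ) * Complex.I)
        = Complex.exp (((-(θ / 2) : ℝ) : ℂ) * Complex.I) := by
      rw [← Complex.exp_add]; congr 1; push_cast; ring
    have e2 : Complex.exp ((θ : ℂ) * Complex.I) * Complex.exp (((-θ : ℝ) : ℂ) * Complex.I)
        = 1 := by
      rw [← Complex.exp_add, ← Complex.exp_zero]; congr 1; push_cast; ring
    have expand : ((r : ℂ) * Complex.exp ((θ / 2 : ℝ) * Complex.I)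
        - (q : ℂ) * Complex.exp (θ * Complex.I)) * Complex.exp ((-θ : ℝ) * Complex.I)
        = (r : ℂ) * Complex.exp ((-(θ / 2) : ℝ) * Complex.I) - (q : ℂ) := by
      rw [sub_mul, mul_assoc, mul_assoc, e1, e2, mul_one]
    rw [expand]
    have him : ((r : ℂ) * Complex.exp ((-(θ / 2) : ℝ) * Complex.I) - (q : ℂ)).im
        = -(r * Real.sin (θ / 2)) := by
      rw [Complex.sub_im, Complex.im_ofReal_mul, Complex.exp_ofReal_mul_I_im,
        Real.sin_neg, Complex.ofReal_im]; ring
    calc r * Real.sin (θ / 2)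
        ≤ |((r : ℂ) * Complex.exp ((-(θ / 2) : ℝ) * Complex.I) - (q : ℂ)).im| := by
          rw [him, abs_neg, _root_.abs_of_nonneg hrs]
      _ ≤ _ := Complex.abs_im_le_norm _
  -- split the variation at t
  have hsplit : eVariationOn γ (Set.Icc 0 t) + eVariationOn γ (Set.Icc t 1)
      = eVariationOn γ (Set.Icc 0 1) := by
    have h := eVariationOn.Icc_add_Icc γ (s := Set.Icc (0:ℝ) 1) ht.1 ht.2 ht
    rw [Set.inter_eq_self_of_subset_right (Set.Icc_subset_Icc le_rfl ht.2),
      Set.inter_eq_self_of_subset_right (Set.Icc_subset_Icc ht.1 le_rfl),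
      Set.inter_self] at h
    exact h
  have h1le : edist (γ 0) (γ t) ≤ eVariationOn γ (Set.Icc 0 t) :=
    eVariationOn.edist_le γ (Set.left_mem_Icc.2 ht.1) (Set.right_mem_Icc.2 ht.1)
  have h2le : edist (γ t) (γ 1) ≤ eVariationOn γ (Set.Icc t 1) :=
    eVariationOn.edist_le γ (Set.left_mem_Icc.2 ht.2) (Set.right_mem_Icc.2 ht.2)
  have hlt : 2 * Real.sin (θ / 2) < dist (γ 0) (γ t) + dist (γ t) (γ 1) := by
    nlinarith
  calc ENNReal.ofReal (2 * Real.sin (θ / 2))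
      < ENNReal.ofReal (dist (γ 0) (γ t) + dist (γ t) (γ 1)) :=
        (ENNReal.ofReal_lt_ofReal_iff (by nlinarith)).2 hlt
    _ = edist (γ 0) (γ t) + edist (γ t) (γ 1) := by
        rw [ENNReal.ofReal_add dist_nonneg dist_nonneg, edist_dist, edist_dist]
    _ ≤ eVariationOn γ (Set.Icc 0 t) + eVariationOn γ (Set.Icc t 1) := add_le_add h1le h2le
    _ = eVariationOn γ (Set.Icc 0 1) := hsplit
end

section
/- Let 0 < θ < π and let γ : [0,1] → ℂ be a continuous map with γ(0) = p for some real p ≥ 0 and γ(1) = q·e^{iθ} for some real q ≥ 0. Suppose there exist s, t ∈ [0,1] with |γ(s)| > 1 and |γ(t)| > 1 such that γ(s) and γ(t) lie strictly on opposite sides of the angle bisector of the sector, i.e., Im(e^{−iθ/2}·γ(s)) < 0 < Im(e^{−iθ/2}·γ(t)) or Im(e^{−iθ/2}·γ(t)) < 0 < Im(e^{−iθ/2}·γ(s)). Then the total variation of γ on [0,1] is strictly greater than 2·sin(θ/2). -/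
open Complex

lemma key_ineq (φ : ℝ) (z : ℂ) :
    Real.sin φ * ‖z‖ ≤ |(Complex.exp (φ * Complex.I) * z).im| + |z.im| := by
  set c := Real.cos φ with hc
  set s := Real.sin φ with hsin
  set a := z.re
  set b := z.im
  have him : (Complex.exp (φ * Complex.I) * z).im = c * b + s * a := by
    simp [Complex.mul_im, Complex.exp_ofReal_mul_I_re, Complex.exp_ofReal_mul_I_im]
    rfl
  rw [him]
  have hcs : c ^ 2 + s ^ 2 = 1 := by rw [hc, hsin]; exact Real.cos_sq_add_sin_sq φ
  have hA : ‖z‖ ^ 2 = a ^ 2 + b ^ 2 := by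
    rw [Complex.sq_norm, Complex.normSq_apply]; ring
  have hA0 : 0 ≤ ‖z‖ := norm_nonneg z
  have hX0 : 0 ≤ |c * b + s * a| := abs_nonneg _
  have hb0 : 0 ≤ |b| := abs_nonneg _
  have hX2 : |c * b + s * a| ^ 2 = (c * b + s * a) ^ 2 := sq_abs _
  have hb2 : |b| ^ 2 = b ^ 2 := sq_abs _
  have hXb : |c * b + s * a| * |b| = |c * b ^ 2 + s * a * b| := by
    rw [← abs_mul]; ring_nf
  have hkey : -(c * (c * b ^ 2 + s * a * b)) ≤ |c * b ^ 2 + s * a * b| := by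
    have h1 : |c| ≤ 1 := by rw [hc]; exact Real.abs_cos_le_one φ
    calc -(c * (c * b ^ 2 + s * a * b)) ≤ |c * (c * b ^ 2 + s * a * b)| := neg_le_abs _
      _ = |c| * |c * b ^ 2 + s * a * b| := abs_mul _ _
      _ ≤ 1 * |c * b ^ 2 + s * a * b| :=
          mul_le_mul_of_nonneg_right h1 (abs_nonneg _)
      _ = _ := one_mul _
  nlinarith [sq_nonneg (|c * b + s * a| + |b| - s * ‖z‖), sq_nonneg (s * ‖z‖)]

lemma dist_ge_im (cc w z : ℂ) (hcc : ‖cc‖ = 1) (h : (cc * w).im = 0) :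
    |(cc * z).im| ≤ ‖z - w‖ := by
  have h1 : (cc * z).im = (cc * (z - w)).im := by
    rw [mul_sub, Complex.sub_im, h, sub_zero]
  rw [h1]
  calc |(cc * (z - w)).im| ≤ ‖cc * (z - w)‖ := Complex.abs_im_le_norm _
    _ = ‖z - w‖ := by rw [norm_mul, hcc, one_mul]

/-- Let `0 < θ < π` and let `γ : [0,1] → ℂ` be continuous with endpoints on the two
bounding rays of the unit sector of angle `θ`. If `γ` has two points strictly outside the
unit disk lying strictly on opposite sides of the angle bisector of the sector, then the
length of `γ` exceeds `2·sin(θ/2)`. -/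
theorem length_gt_chord_of_two_points_opposite_sides (θ : ℝ)
    (hθ0 : 0 < θ) (hθ : θ < Real.pi)
    (γ : ℝ → ℂ) (hcont : ContinuousOn γ (Set.Icc 0 1))
    (p q : ℝ) (hp : 0 ≤ p) (hq : 0 ≤ q)
    (h0 : γ 0 = (p : ℂ)) (h1 : γ 1 = (q : ℂ) * Complex.exp (θ * Complex.I))
    (hXY : ∃ s ∈ Set.Icc (0 : ℝ) 1, ∃ t ∈ Set.Icc (0 : ℝ) 1,
      1 < ‖γ s‖ ∧ 1 < ‖γ t‖ ∧
      ((Complex.exp (-(θ / 2 : ℝ) * Complex.I) * γ s).im < 0 ∧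
        0 < (Complex.exp (-(θ / 2 : ℝ) * Complex.I) * γ t).im ∨
       (Complex.exp (-(θ / 2 : ℝ) * Complex.I) * γ t).im < 0 ∧
        0 < (Complex.exp (-(θ / 2 : ℝ) * Complex.I) * γ s).im)) :
    ENNReal.ofReal (2 * Real.sin (θ / 2)) < eVariationOn γ (Set.Icc 0 1) := by
  set φ := θ / 2 with hφ
  set eφ := Complex.exp (-(φ : ℝ) * Complex.I) with heφ
  set f : ℝ → ℝ := fun x => (eφ * γ x).im with hf
  -- normalize to a ≤ b with opposite signs
  have main : ∃ a b : ℝ, a ≤ b ∧ a ∈ Set.Icc (0:ℝ) 1 ∧ b ∈ Set.Icc (0:ℝ) 1 ∧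
      1 < ‖γ a‖ ∧ 1 < ‖γ b‖ ∧ (0 : ℝ) ∈ Set.uIcc (f a) (f b) := by
    obtain ⟨s, hsI, t, htI, hγs, hγt, hcase⟩ := hXY
    have h0mem : (0 : ℝ) ∈ Set.uIcc (f s) (f t) := by
      rcases hcase with ⟨h1', h2'⟩ | ⟨h1', h2'⟩
      · exact Set.mem_uIcc.2 (Or.inl ⟨le_of_lt h1', le_of_lt h2'⟩)
      · exact Set.mem_uIcc.2 (Or.inr ⟨le_of_lt h1', le_of_lt h2'⟩)
    rcases le_total s t with h | h
    · exact ⟨s, t, h, hsI, htI, hγs, hγt, h0mem⟩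
    · exact ⟨t, s, h, htI, hsI, hγt, hγs, by rwa [Set.uIcc_comm]⟩
  obtain ⟨a, b, hab, haI, hbI, hga, hgb, h0mem⟩ := main
  -- crossing point r of the bisector
  have hsub : Set.uIcc a b ⊆ Set.Icc 0 1 := by
    rw [Set.uIcc_of_le hab]
    exact Set.Icc_subset_Icc haI.1 hbI.2
  have hfc : ContinuousOn f (Set.uIcc a b) :=
    (Complex.continuous_im.comp (continuous_const.mul continuous_id)).comp_continuousOn
      (hcont.mono hsub)
  obtain ⟨r, hrmem, hfr⟩ := intermediate_value_uIcc hfc h0mem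
  rw [Set.uIcc_of_le hab] at hrmem
  have har : a ≤ r := hrmem.1
  have hrb : r ≤ b := hrmem.2
  have h0a : (0:ℝ) ≤ a := haI.1
  have hb1 : b ≤ 1 := hbI.2
  -- variation lower bound via partition 0 ≤ a ≤ r ≤ b ≤ 1
  have hvar : edist (γ a) (γ 0) + edist (γ r) (γ a) + edist (γ b) (γ r) + edist (γ 1) (γ b)
      ≤ eVariationOn γ (Set.Icc 0 1) := by
    set u : ℕ → ℝ := fun n => if n = 0 then 0 else if n = 1 then a else if n = 2 then r
      else if n = 3 then b else 1 with hu
    have hmono : Monotone u := by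
      apply monotone_nat_of_le_succ
      intro n
      match n with
      | 0 => simpa [hu] using h0a
      | 1 => simpa [hu] using har
      | 2 => simpa [hu] using hrb
      | 3 => simpa [hu] using hb1
      | (n+4) => simp [hu]
    have hmem : ∀ i, u i ∈ Set.Icc (0:ℝ) 1 := by
      intro i
      match i with
      | 0 => simp [hu]
      | 1 => exact ⟨h0a, le_trans har (le_trans hrb hb1)⟩
      | 2 => exact ⟨le_trans h0a har, le_trans hrb hb1⟩
      | 3 => exact ⟨le_trans h0a (le_trans har hrb), hb1⟩
      | (n+4) => simp [hu]
    have := eVariationOn.sum_le (f := γ) (s := Set.Icc 0 1) (n := 4) hmono hmem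
    simpa [hu, Finset.sum_range_succ] using this
  refine lt_of_lt_of_le ?_ hvar
  -- now a real inequality
  have hsin : 0 < Real.sin φ := by
    apply Real.sin_pos_of_pos_of_lt_pi
    · rw [hφ]; linarith
    · rw [hφ]; linarith [Real.pi_pos]
  have habs_eφ : ‖eφ‖ = 1 := by
    rw [heφ, Complex.norm_exp]
    norm_num
  -- side a : from the real axis to the bisector
  have hfima : (eφ * γ a).im = f a := rfl
  have hfr0 : (eφ * γ r).im = 0 := hfr
  have hkA : Real.sin φ * ‖γ a‖
      ≤ ‖γ a - γ 0‖ + ‖γ a - γ r‖ := by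
    have hk := key_ineq φ (eφ * γ a)
    have he : Complex.exp ((φ:ℂ) * Complex.I) * (eφ * γ a) = γ a := by
      rw [heφ, ← mul_assoc, ← Complex.exp_add]
      push_cast
      ring_nf
      simp
    rw [he, norm_mul, habs_eφ, one_mul] at hk
    have hd1 : |(γ a).im| ≤ ‖γ a - γ 0‖ := by
      have := dist_ge_im 1 (γ 0) (γ a) (by simp) (by rw [one_mul, h0]; simp)
      simpa using this
    have hd2 : |(eφ * γ a).im| ≤ ‖γ a - γ r‖ :=
      dist_ge_im eφ (γ r) (γ a) habs_eφ hfr0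
    linarith
  -- side b : from the bisector to the ray at angle θ
  set eθ := Complex.exp (-(θ : ℝ) * Complex.I) with heθ
  have habs_eθ : ‖eθ‖ = 1 := by
    rw [heθ, Complex.norm_exp]
    norm_num
  have hkB : Real.sin φ * ‖γ b‖
      ≤ ‖γ b - γ r‖ + ‖γ b - γ 1‖ := by
    have hk := key_ineq φ (eθ * γ b)
    have he : Complex.exp ((φ:ℂ) * Complex.I) * (eθ * γ b) = eφ * γ b := by
      rw [heθ, heφ, ← mul_assoc, ← Complex.exp_add]
      have harg : ((φ:ℂ) * Complex.I + -(θ:ℝ) * Complex.I) = -(φ:ℝ) * Complex.I := by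
        rw [hφ]; push_cast; ring
      rw [harg]
    rw [he, norm_mul, habs_eθ, one_mul] at hk
    have hd3 : |(eφ * γ b).im| ≤ ‖γ b - γ r‖ :=
      dist_ge_im eφ (γ r) (γ b) habs_eφ hfr0
    have hd4 : |(eθ * γ b).im| ≤ ‖γ b - γ 1‖ := by
      apply dist_ge_im eθ (γ 1) (γ b) habs_eθ
      rw [h1, heθ, ← mul_assoc, mul_comm (Complex.exp _) (q:ℂ), mul_assoc, ← Complex.exp_add]
      push_cast
      ring_nf
      simp
    linarith
  -- assemble
  have hrolls : 2 * Real.sin φ < ‖γ a - γ 0‖ + ‖γ a - γ r‖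
      + (‖γ b - γ r‖ + ‖γ b - γ 1‖) := by
    nlinarith
  calc ENNReal.ofReal (2 * Real.sin φ)
      < ENNReal.ofReal (‖γ a - γ 0‖ + ‖γ a - γ r‖
        + (‖γ b - γ r‖ + ‖γ b - γ 1‖)) := by
        exact (ENNReal.ofReal_lt_ofReal_iff (by linarith)).2 hrolls
    _ ≤ edist (γ a) (γ 0) + edist (γ r) (γ a) + edist (γ b) (γ r) + edist (γ 1) (γ b) := by
        rw [edist_dist, edist_dist, edist_dist, edist_dist,
          Complex.dist_eq, Complex.dist_eq, Complex.dist_eq, Complex.dist_eq]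
        rw [← ENNReal.ofReal_add (by positivity) (by positivity),
          ← ENNReal.ofReal_add (by positivity) (by positivity),
          ← ENNReal.ofReal_add (by positivity) (by positivity)]
        apply ENNReal.ofReal_le_ofReal
        rw [show γ r - γ a = -(γ a - γ r) by ring,
          show γ 1 - γ b = -(γ b - γ 1) by ring, norm_neg, norm_neg]
        linarith
end

section
/- Let γ : [0,1] → ℂ be an injective continuous map that is piecewise affine with respect to some partition of [0,1], and let 0 < θ < π. Then there exist a point c ∈ ℂ and unit vectors u₁, u₂ ∈ ℂ whose angle (in [0,π]) equals π − θ, such that Re(conj(u₁)·(γ(t) − c)) ≥ 0 and Re(conj(u₂)·(γ(t) − c)) ≥ 0 for all t ∈ [0,1] (so γ lies in the closed wedge of angle θ with vertex c), and moreover either c ∈ γ([0,1]) (γ touches the wedge's vertex) or there exist t₁ < t₂ < t₃ in [0,1] such that Re(conj(u₁)·(γ(t₂) − c)) = 0 and Re(conj(u₂)·(γ(t₁) − c)) = Re(conj(u₂)·(γ(t₃) − c)) = 0, or Re(conj(u₂)·(γ(t₂) − c)) = 0 and Re(conj(u₁)·(γ(t₁) − c)) = Re(conj(u₁)·(γ(t₃)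 − c)) = 0 (γ touches the two bounding rays at three parametrically alternating points). -/
open Set

open Complex Filter

noncomputable section
namespace LambdaAux

def v (φ : ℝ) : ℂ := Complex.exp (φ * Complex.I)

lemma v_add (φ ψ : ℝ) : v (φ + ψ) = v φ * v ψ := by
  rw [v, v, v, ← Complex.exp_add]
  push_cast
  ring_nf

lemma v_zero : v 0 = 1 := by simp [v]

lemma abs_v (φ : ℝ) : ‖v φ‖ = 1 := Complex.norm_exp_ofReal_mul_I φ

lemma conj_v (φ : ℝ) : (starRingEnd ℂ) (v φ) = v (-φ) := by
  rw [v, ← Complex.exp_conj]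
  congr 1
  simp [Complex.conj_I]

lemma conj_v_mul_v (φ ψ : ℝ) : (starRingEnd ℂ) (v φ) * v ψ = v (ψ - φ) := by
  rw [conj_v, ← v_add]
  ring_nf

lemma v_re (φ : ℝ) : (v φ).re = Real.cos φ := Complex.exp_ofReal_mul_I_re φ

lemma v_im (φ : ℝ) : (v φ).im = Real.sin φ := Complex.exp_ofReal_mul_I_im φ

lemma continuous_v : Continuous v :=
  Complex.continuous_exp.comp (Complex.continuous_ofReal.mul continuous_const)

/-- The linear functional in direction `φ` along the curve. -/
def F (γ : ℝ → ℂ) (φ t : ℝ) : ℝ := ((starRingEnd ℂ) (v φ) * γ t).re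

/-- The minimum of `F γ φ` over `[0,1]`. -/
def hmin (γ : ℝ → ℂ) (φ : ℝ) : ℝ := sInf (F γ φ '' Icc 0 1)

/-- The set of minimizers. -/
def A (γ : ℝ → ℂ) (φ : ℝ) : Set ℝ := Icc 0 1 ∩ (F γ φ) ⁻¹' {hmin γ φ}

lemma mem_A {γ : ℝ → ℂ} {φ t : ℝ} :
    t ∈ A γ φ ↔ t ∈ Icc (0:ℝ) 1 ∧ F γ φ t = hmin γ φ := by
  simp [A]

variable {γ : ℝ → ℂ}

lemma contF (hcont : ContinuousOn γ (Icc 0 1)) (φ : ℝ) :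
    ContinuousOn (F γ φ) (Icc 0 1) :=
  (Complex.continuous_re.comp (continuous_const.mul continuous_id)).comp_continuousOn hcont

lemma exists_min (hcont : ContinuousOn γ (Icc 0 1)) (φ : ℝ) :
    ∃ t ∈ Icc (0:ℝ) 1, F γ φ t = hmin γ φ ∧ ∀ s ∈ Icc (0:ℝ) 1, F γ φ t ≤ F γ φ s := by
  obtain ⟨t, ht, hm⟩ := isCompact_Icc.exists_isMinOn ⟨0, by norm_num⟩ (contF hcont φ)
  have hle : ∀ s ∈ Icc (0:ℝ) 1, F γ φ t ≤ F γ φ s := fun s hs => isMinOn_iff.mp hm s hs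
  refine ⟨t, ht, ?_, hle⟩
  refine le_antisymm (le_csInf ⟨F γ φ t, mem_image_of_mem _ ht⟩ ?_) (csInf_le ⟨F γ φ t, ?_⟩ (mem_image_of_mem _ ht))
  · rintro x ⟨s, hs, rfl⟩; exact hle s hs
  · rintro x ⟨s, hs, rfl⟩; exact hle s hs

lemma bddBelow_F (hcont : ContinuousOn γ (Icc 0 1)) (φ : ℝ) :
    BddBelow (F γ φ '' Icc 0 1) := by
  obtain ⟨t, _, _, hle⟩ := exists_min hcont φ
  exact ⟨F γ φ t, by rintro x ⟨s, hs, rfl⟩; exact hle s hs⟩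

lemma hmin_le (hcont : ContinuousOn γ (Icc 0 1)) (φ : ℝ) {t : ℝ} (ht : t ∈ Icc (0:ℝ) 1) :
    hmin γ φ ≤ F γ φ t :=
  csInf_le (bddBelow_F hcont φ) (mem_image_of_mem _ ht)

lemma A_nonempty (hcont : ContinuousOn γ (Icc 0 1)) (φ : ℝ) : (A γ φ).Nonempty := by
  obtain ⟨t, ht, he, _⟩ := exists_min hcont φ
  exact ⟨t, mem_A.mpr ⟨ht, he⟩⟩

lemma A_isCompact (hcont : ContinuousOn γ (Icc 0 1)) (φ : ℝ) : IsCompact (A γ φ) := by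
  have hclosed : IsClosed (A γ φ) :=
    (contF hcont φ).preimage_isClosed_of_isClosed isClosed_Icc isClosed_singleton
  exact isCompact_Icc.of_isClosed_subset hclosed inter_subset_left

lemma A_subset (φ : ℝ) : A γ φ ⊆ Icc 0 1 := inter_subset_left

lemma exists_B (hcont : ContinuousOn γ (Icc 0 1)) :
    ∃ B : ℝ, 0 ≤ B ∧ ∀ t ∈ Icc (0:ℝ) 1, ‖γ t‖ ≤ B := by
  obtain ⟨C, hC⟩ := isCompact_Icc.exists_bound_of_continuousOn hcont
  exact ⟨max C 0, le_max_right _ _, fun t ht =>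
    le_trans (by exact hC t ht) (le_max_left _ _)⟩

lemma F_bound {B : ℝ} (hB : ∀ t ∈ Icc (0:ℝ) 1, ‖γ t‖ ≤ B)
    (φ ψ : ℝ) {t : ℝ} (ht : t ∈ Icc (0:ℝ) 1) :
    |F γ φ t - F γ ψ t| ≤ ‖v φ - v ψ‖ * B := by
  have h0 : F γ φ t - F γ ψ t = ((starRingEnd ℂ) (v φ - v ψ) * γ t).re := by
    rw [F, F, map_sub]; rw [← Complex.sub_re]; ring_nf
  rw [h0]
  calc |((starRingEnd ℂ) (v φ - v ψ) * γ t).re| ≤ ‖(starRingEnd ℂ) (v φ - v ψ) * γ t‖ :=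
        Complex.abs_re_le_norm _
    _ = ‖v φ - v ψ‖ * ‖γ t‖ := by rw [norm_mul, Complex.norm_conj]
    _ ≤ ‖v φ - v ψ‖ * B :=
        mul_le_mul_of_nonneg_left (hB t ht) (norm_nonneg _)

lemma hmin_bound (hcont : ContinuousOn γ (Icc 0 1)) {B : ℝ}
    (hB : ∀ t ∈ Icc (0:ℝ) 1, ‖γ t‖ ≤ B) (φ ψ : ℝ) :
    |hmin γ φ - hmin γ ψ| ≤ ‖v φ - v ψ‖ * B := by
  have key : ∀ φ' ψ' : ℝ, hmin γ φ' - hmin γ ψ' ≤ ‖v φ' - v ψ'‖ * B := by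
    intro φ' ψ'
    obtain ⟨t, ht, he, _⟩ := exists_min hcont ψ'
    have h1 : hmin γ φ' ≤ F γ φ' t := hmin_le hcont φ' ht
    have h2 := abs_le.mp (F_bound hB φ' ψ' ht)
    linarith [h2.2]
  have h1 := key φ ψ
  have h2 := key ψ φ
  have h3 : ‖v ψ - v φ‖ = ‖v φ - v ψ‖ := by
    rw [show v ψ - v φ = -(v φ - v ψ) by ring, norm_neg]
  rw [abs_le]; constructor <;> [linarith [h2, h3 ▸ h2]; linarith]

lemma avoid (hcont : ContinuousOn γ (Icc 0 1)) {B : ℝ}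
    (hB : ∀ t ∈ Icc (0:ℝ) 1, ‖γ t‖ ≤ B) (φ₀ : ℝ) {C : Set ℝ}
    (hCc : IsClosed C) (hsub : C ⊆ Icc 0 1) (hdisj : ∀ t ∈ C, t ∉ A γ φ₀) :
    ∀ᶠ φ in nhds φ₀, ∀ t ∈ C, t ∉ A γ φ := by
  rcases C.eq_empty_or_nonempty with rfl | hCne
  · exact Eventually.of_forall (fun φ t ht => absurd ht (notMem_empty t))
  have hCcomp : IsCompact C := isCompact_Icc.of_isClosed_subset hCc hsub
  have hGcont : ContinuousOn (fun t => F γ φ₀ t - hmin γ φ₀) C :=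
    (((contF hcont φ₀).mono hsub).sub continuousOn_const)
  obtain ⟨t₀, ht₀C, hmin₀⟩ := hCcomp.exists_isMinOn hCne hGcont
  set ε := F γ φ₀ t₀ - hmin γ φ₀ with hε_def
  have hε : 0 < ε := by
    rcases lt_or_eq_of_le (hmin_le hcont φ₀ (hsub ht₀C)) with h | h
    · linarith
    · exact absurd (mem_A.mpr ⟨hsub ht₀C, h.symm⟩) (hdisj t₀ ht₀C)
  have hev : ∀ᶠ φ in nhds φ₀, ‖v φ - v φ₀‖ * B < ε / 3 := by
    have hc : ContinuousAt (fun φ => ‖v φ - v φ₀‖ * B) φ₀ := by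
      apply ContinuousAt.mul _ continuousAt_const
      exact (continuous_norm.comp ((continuous_v.sub continuous_const))).continuousAt
    have := hc.tendsto
    simp only [sub_self, norm_zero, zero_mul] at this
    exact this.eventually_lt_const (by linarith)
  filter_upwards [hev] with φ hφ t htC htA
  have h1 : F γ φ t = hmin γ φ := (mem_A.mp htA).2
  have h2 := abs_le.mp (F_bound hB φ₀ φ (hsub htC))
  have h3 := abs_le.mp (hmin_bound hcont hB φ φ₀)
  have h4 : ‖v φ₀ - v φ‖ = ‖v φ - v φ₀‖ := by
    rw [show v φ₀ - v φ = -(v φ - v φ₀) by ring, norm_neg]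
  have h5 : F γ φ₀ t₀ ≤ F γ φ₀ t := by
    have := isMinOn_iff.mp hmin₀ t htC; linarith
  rw [h4] at h2
  linarith [h2.1, h2.2, h3.1, h3.2]

lemma open_lt (hcont : ContinuousOn γ (Icc 0 1)) (β₁ β₂ : ℝ) :
    IsOpen {φ : ℝ | ∀ x ∈ A γ (φ + β₁), ∀ y ∈ A γ (φ + β₂), x < y} := by
  obtain ⟨B, hB0, hB⟩ := exists_B hcont
  rw [isOpen_iff_mem_nhds]
  intro φ₀ hφ₀
  set M := sSup (A γ (φ₀ + β₁)) with hM_def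
  set m := sInf (A γ (φ₀ + β₂)) with hm_def
  have hMmem : M ∈ A γ (φ₀ + β₁) :=
    (A_isCompact hcont _).sSup_mem (A_nonempty hcont _)
  have hmmem : m ∈ A γ (φ₀ + β₂) :=
    (A_isCompact hcont _).sInf_mem (A_nonempty hcont _)
  have hMm : M < m := hφ₀ M hMmem m hmmem
  set c := (M + m) / 2 with hc_def
  have hMc : M < c := by rw [hc_def]; linarith
  have hcm : c < m := by rw [hc_def]; linarith
  have hd₁ : ∀ t ∈ Icc (0:ℝ) 1 ∩ Ici c, t ∉ A γ (φ₀ + β₁) := by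
    rintro t ⟨_, htc⟩ htA
    have : t ≤ M := le_csSup (A_isCompact hcont _).bddAbove htA
    exact absurd (le_trans htc this) (not_le.mpr hMc)
  have hd₂ : ∀ t ∈ Icc (0:ℝ) 1 ∩ Iic c, t ∉ A γ (φ₀ + β₂) := by
    rintro t ⟨_, htc⟩ htA
    have : m ≤ t := csInf_le (A_isCompact hcont _).bddBelow htA
    exact absurd (le_trans this htc) (not_le.mpr hcm)
  have hev₁ := avoid hcont hB (φ₀ + β₁) (isClosed_Icc.inter isClosed_Ici)
    inter_subset_left hd₁
  have hev₂ := avoid hcont hB (φ₀ + β₂) (isClosed_Icc.inter isClosed_Iic)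
    inter_subset_left hd₂
  have ht₁ : Tendsto (fun φ : ℝ => φ + β₁) (nhds φ₀) (nhds (φ₀ + β₁)) :=
    (continuous_add_right β₁).tendsto φ₀
  have ht₂ : Tendsto (fun φ : ℝ => φ + β₂) (nhds φ₀) (nhds (φ₀ + β₂)) :=
    (continuous_add_right β₂).tendsto φ₀
  filter_upwards [ht₁.eventually hev₁, ht₂.eventually hev₂] with φ h₁ h₂
  intro x hx y hy
  have hxI : x ∈ Icc (0:ℝ) 1 := A_subset _ hx
  have hyI : y ∈ Icc (0:ℝ) 1 := A_subset _ hy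
  have hxc : x < c := by
    by_contra hle
    exact h₁ x ⟨hxI, not_lt.mp hle⟩ hx
  have hyc : c < y := by
    by_contra hle
    exact h₂ y ⟨hyI, not_lt.mp hle⟩ hy
  exact lt_trans hxc hyc

lemma order_dichotomy {A₁ A₂ : Set ℝ}
    (hd : ∀ t ∈ A₁, t ∉ A₂)
    (hno1 : ¬∃ t₁ t₂ t₃ : ℝ, t₁ < t₂ ∧ t₂ < t₃ ∧ t₂ ∈ A₁ ∧ t₁ ∈ A₂ ∧ t₃ ∈ A₂)
    (hno2 : ¬∃ t₁ t₂ t₃ : ℝ, t₁ < t₂ ∧ t₂ < t₃ ∧ t₂ ∈ A₂ ∧ t₁ ∈ A₁ ∧ t₃ ∈ A₁) :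
    (∀ x ∈ A₁, ∀ y ∈ A₂, x < y) ∨ (∀ x ∈ A₁, ∀ y ∈ A₂, y < x) := by
  by_contra hco
  push_neg at hco
  obtain ⟨⟨x, hx, y, hy, hyx⟩, ⟨x', hx', y', hy', hx'y'⟩⟩ := hco
  have hyx' : y < x := hyx.lt_of_ne (by rintro rfl; exact hd _ hx hy)
  have hx'y'' : x' < y' := hx'y'.lt_of_ne (by rintro rfl; exact hd _ hx' hy')
  rcases le_or_gt x x' with hxx' | hx'x
  · exact hno1 ⟨y, x, y', hyx', lt_of_le_of_lt hxx' hx'y'', hx, hy, hy'⟩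
  · rcases lt_or_ge x' y with h1 | h2
    · exact hno2 ⟨x', y, x, h1, hyx', hy, hx', hx⟩
    · have hyx'' : y < x' := h2.lt_of_ne' (by rintro rfl; exact hd _ hx' hy)
      exact hno1 ⟨y, x', y', hyx'', hx'y'', hx', hy, hy'⟩

lemma exists_seg {n : ℕ} {T : Fin (n + 1) → ℝ} (hT : StrictMono T)
    (hT0 : T 0 = 0) (hT1 : T (Fin.last n) = 1) {t : ℝ} (ht : t ∈ Icc (0:ℝ) 1) :
    ∃ i : Fin n, t ∈ Icc (T i.castSucc) (T i.succ) := by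
  classical
  have hn : 0 < n := by
    by_contra hcon
    push_neg at hcon
    interval_cases n
    rw [show Fin.last 0 = 0 from rfl, hT0] at hT1
    norm_num at hT1
  set Sf : Finset (Fin (n + 1)) := Finset.univ.filter (fun j => T j ≤ t) with hSf
  have h0S : (0 : Fin (n + 1)) ∈ Sf := by
    simp only [hSf, Finset.mem_filter, Finset.mem_univ, true_and, hT0]
    exact ht.1
  have hSne : Sf.Nonempty := ⟨0, h0S⟩
  set j := Sf.max' hSne with hj
  have hjS : j ∈ Sf := Sf.max'_mem hSne
  have hjt : T j ≤ t := by
    have := hjS; simp only [hSf, Finset.mem_filter] at this; exact this.2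
  by_cases hlast : j = Fin.last n
  · have ht1 : t = 1 := le_antisymm ht.2 (by rw [← hT1, ← hlast]; exact hjt)
    refine ⟨⟨n - 1, by omega⟩, ?_, ?_⟩
    · refine le_trans ?_ (hT1.trans ht1.symm).le
      exact hT.monotone (Fin.le_last _)
    · have hsucc : (⟨n - 1, by omega⟩ : Fin n).succ = Fin.last n := by
        ext; simp [Fin.succ, Fin.last]; omega
      exact (ht1.trans hT1.symm).le.trans (congrArg T hsucc).symm.le
  · have hjn : (j : ℕ) < n := by
      have h1 : j < Fin.last n := lt_of_le_of_ne (Fin.le_last j) hlast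
      exact h1
    refine ⟨⟨(j : ℕ), hjn⟩, ?_, ?_⟩
    · have hcs : (⟨(j : ℕ), hjn⟩ : Fin n).castSucc = j := by
        ext; simp
      rw [hcs]; exact hjt
    · by_contra hq
      push_neg at hq
      have hmem : (⟨(j : ℕ), hjn⟩ : Fin n).succ ∈ Sf := by
        simp only [hSf, Finset.mem_filter, Finset.mem_univ, true_and]
        exact hq.le
      have hle := Sf.le_max' _ hmem
      rw [← hj] at hle
      have hlt : j < (⟨(j : ℕ), hjn⟩ : Fin n).succ := by
        rw [Fin.lt_iff_val_lt_val]
        simp [Fin.succ]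
      exact absurd hle (not_le.mpr hlt)

lemma T_mem_Icc {n : ℕ} {T : Fin (n + 1) → ℝ} (hT : StrictMono T)
    (hT0 : T 0 = 0) (hT1 : T (Fin.last n) = 1) (j : Fin (n + 1)) :
    T j ∈ Icc (0:ℝ) 1 :=
  ⟨hT0 ▸ hT.monotone (Fin.zero_le j), hT1 ▸ hT.monotone (Fin.le_last j)⟩

lemma exists_breakpoint (hcont : ContinuousOn γ (Icc 0 1)) {n : ℕ} {T : Fin (n + 1) → ℝ}
    (hT : StrictMono T) (hT0 : T 0 = 0) (hT1 : T (Fin.last n) = 1)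
    (hseg : ∀ i : Fin n, ∃ a b : ℂ, ∀ s ∈ Set.Icc (T i.castSucc) (T i.succ), γ s = a + s • b)
    (φ : ℝ) : ∃ j : Fin (n + 1), T j ∈ A γ φ := by
  obtain ⟨t, htI, hte, htm⟩ := exists_min hcont φ
  obtain ⟨i, hi⟩ := exists_seg hT hT0 hT1 htI
  obtain ⟨a, b, hab⟩ := hseg i
  set c₀ := ((starRingEnd ℂ) (v φ) * a).re with hc₀
  set c₁ := ((starRingEnd ℂ) (v φ) * b).re with hc₁
  have key : ∀ s ∈ Icc (T i.castSucc) (T i.succ), F γ φ s = c₀ + s * c₁ := by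
    intro s hs
    rw [F, hab s hs, Complex.real_smul, mul_add, Complex.add_re, hc₀, hc₁,
      show (starRingEnd ℂ) (v φ) * ((s : ℂ) * b) = (s : ℂ) * ((starRingEnd ℂ) (v φ) * b) by ring,
      Complex.re_ofReal_mul]
  have hpI : T i.castSucc ∈ Icc (0:ℝ) 1 := T_mem_Icc hT hT0 hT1 _
  have hqI : T i.succ ∈ Icc (0:ℝ) 1 := T_mem_Icc hT hT0 hT1 _
  have hpq : T i.castSucc ≤ T i.succ := hT.monotone (Fin.castSucc_le_succ i)
  have hFt : F γ φ t = c₀ + t * c₁ := key t hi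
  rcases le_or_gt 0 c₁ with hpos | hneg
  · refine ⟨i.castSucc, mem_A.mpr ⟨hpI, ?_⟩⟩
    have hFp : F γ φ (T i.castSucc) = c₀ + T i.castSucc * c₁ :=
      key _ ⟨le_refl _, hpq⟩
    have h1 : F γ φ (T i.castSucc) ≤ F γ φ t := by
      rw [hFp, hFt]
      have := mul_le_mul_of_nonneg_right hi.1 hpos
      linarith
    exact le_antisymm (hte ▸ h1) (hmin_le hcont φ hpI)
  · refine ⟨i.succ, mem_A.mpr ⟨hqI, ?_⟩⟩
    have hFq : F γ φ (T i.succ) = c₀ + T i.succ * c₁ :=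
      key _ ⟨hpq, le_refl _⟩
    have h1 : F γ φ (T i.succ) ≤ F γ φ t := by
      rw [hFq, hFt]
      have := mul_le_mul_of_nonpos_right hi.2 hneg.le
      linarith
    exact le_antisymm (hte ▸ h1) (hmin_le hcont φ hqI)

lemma key_claim (hcont : ContinuousOn γ (Icc 0 1)) {n : ℕ} {T : Fin (n + 1) → ℝ}
    (hT : StrictMono T) (hT0 : T 0 = 0) (hT1 : T (Fin.last n) = 1)
    (hseg : ∀ i : Fin n, ∃ a b : ℂ, ∀ s ∈ Set.Icc (T i.castSucc) (T i.succ), γ s = a + s • b)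
    (α : ℝ) :
    ∃ φ : ℝ, (∃ t, t ∈ A γ φ ∧ t ∈ A γ (φ + α)) ∨
      ∃ t₁ t₂ t₃ : ℝ, t₁ < t₂ ∧ t₂ < t₃ ∧
        ((t₂ ∈ A γ φ ∧ t₁ ∈ A γ (φ + α) ∧ t₃ ∈ A γ (φ + α)) ∨
         (t₂ ∈ A γ (φ + α) ∧ t₁ ∈ A γ φ ∧ t₃ ∈ A γ φ)) := by
  by_contra hcl
  rw [not_exists] at hcl
  set Pset : Set ℝ := {φ | ∀ x ∈ A γ φ, ∀ y ∈ A γ (φ + α), x < y} with hPset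
  set Nset : Set ℝ := {φ | ∀ x ∈ A γ (φ + α), ∀ y ∈ A γ φ, x < y} with hNset
  have hP : IsOpen Pset := by
    have := open_lt hcont 0 α
    simpa only [add_zero] using this
  have hN : IsOpen Nset := by
    have := open_lt hcont α 0
    simpa only [add_zero] using this
  have hsep : ∀ φ : ℝ, φ ∈ Pset ∪ Nset := by
    intro φ
    have hnφ := hcl φ
    rw [not_or] at hnφ
    obtain ⟨hn1, hn2⟩ := hnφ
    have hd : ∀ t ∈ A γ φ, t ∉ A γ (φ + α) := fun t h1 h2 => hn1 ⟨t, h1, h2⟩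
    have hno1 : ¬∃ t₁ t₂ t₃ : ℝ, t₁ < t₂ ∧ t₂ < t₃ ∧ t₂ ∈ A γ φ ∧
        t₁ ∈ A γ (φ + α) ∧ t₃ ∈ A γ (φ + α) := by
      rintro ⟨t₁, t₂, t₃, a, b, c, d, e⟩
      exact hn2 ⟨t₁, t₂, t₃, a, b, Or.inl ⟨c, d, e⟩⟩
    have hno2 : ¬∃ t₁ t₂ t₃ : ℝ, t₁ < t₂ ∧ t₂ < t₃ ∧ t₂ ∈ A γ (φ + α) ∧
        t₁ ∈ A γ φ ∧ t₃ ∈ A γ φ := by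
      rintro ⟨t₁, t₂, t₃, a, b, c, d, e⟩
      exact hn2 ⟨t₁, t₂, t₃, a, b, Or.inr ⟨c, d, e⟩⟩
    rcases order_dichotomy hd hno1 hno2 with h | h
    · exact Or.inl h
    · exact Or.inr (fun x hx y hy => h y hy x hx)
  have hdisj : ∀ φ : ℝ, φ ∈ Pset → φ ∈ Nset → False := by
    intro φ hp hn
    obtain ⟨t, ht⟩ := A_nonempty hcont φ
    obtain ⟨s, hs⟩ := A_nonempty hcont (φ + α)
    exact lt_asymm (hp t ht s hs) (hn s hs t ht)
  have hcompl : Psetᶜ = Nset := by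
    ext φ
    exact ⟨fun h => (hsep φ).resolve_left h, fun hn hp => hdisj φ hp hn⟩
  have hclopen : IsClopen Pset := by
    refine ⟨?_, hP⟩
    rw [← isOpen_compl_iff, hcompl]
    exact hN
  -- the selection function
  set sel : ℝ → ℝ := fun φ => sInf (Set.range T ∩ A γ φ) with hsel
  have hselmem : ∀ φ, sel φ ∈ Set.range T ∩ A γ φ := by
    intro φ
    obtain ⟨j, hj⟩ := exists_breakpoint hcont hT hT0 hT1 hseg φ
    exact Set.Nonempty.csInf_mem ⟨T j, ⟨j, rfl⟩, hj⟩ ((Set.finite_range T).inter_of_left _)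
  have hfin : ¬(Set.range T).Infinite := fun h => h (Set.finite_range T)
  rcases isClopen_iff.mp hclopen with hPe | hPu
  · -- Nset = univ
    have hNall : ∀ φ : ℝ, φ ∈ Nset := by
      intro φ
      rcases hsep φ with h | h
      · exact absurd (hPe ▸ h) (notMem_empty φ)
      · exact h
    have hdec : ∀ k : ℕ, sel ((k + 1 : ℕ) * α) < sel (k * α) := by
      intro k
      have h1 := hNall ((k : ℝ) * α) (sel ((k : ℝ) * α + α)) (hselmem _).2 (sel ((k : ℝ) * α)) (hselmem _).2
      have h2 : ((k + 1 : ℕ) : ℝ) * α = (k : ℝ) * α + α := by push_cast; ring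
      rw [h2]
      exact h1
    have hanti : StrictAnti (fun k : ℕ => sel (k * α)) := strictAnti_nat_of_succ_lt hdec
    exact hfin (Set.infinite_of_injective_forall_mem hanti.injective
      (fun k => (hselmem ((k : ℝ) * α)).1))
  · -- Pset = univ
    have hPall : ∀ φ : ℝ, φ ∈ Pset := fun φ => hPu ▸ mem_univ φ
    have hinc : ∀ k : ℕ, sel (k * α) < sel ((k + 1 : ℕ) * α) := by
      intro k
      have h1 := hPall ((k : ℝ) * α) (sel ((k : ℝ) * α)) (hselmem _).2 (sel ((k : ℝ) * α + α)) (hselmem _).2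
      have h2 : ((k + 1 : ℕ) : ℝ) * α = (k : ℝ) * α + α := by push_cast; ring
      rw [h2]
      exact h1
    have hmono : StrictMono (fun k : ℕ => sel (k * α)) := strictMono_nat_of_lt_succ hinc
    exact hfin (Set.infinite_of_injective_forall_mem hmono.injective
      (fun k => (hselmem ((k : ℝ) * α)).1))

end LambdaAux
end

/-- `γ` is piecewise affine with respect to some partition `0 = t₀ < t₁ < ⋯ < tₙ = 1`. -/
def IsPiecewiseAffineOnUnitInterval (γ : ℝ → ℂ) : Prop :=
  ∃ (n : ℕ) (T : Fin (n + 1) → ℝ), StrictMono T ∧ T 0 = 0 ∧ T (Fin.last n) = 1 ∧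
    ∀ i : Fin n, ∃ a b : ℂ, ∀ s ∈ Set.Icc (T i.castSucc) (T i.succ), γ s = a + s • b

/-- **Lambda property.** Every simple polygonal arc can be placed in a closed wedge of
angle `θ` (given by a vertex `c` and inward unit normals `u₁`, `u₂` making angle `π − θ`)
so that either the arc touches the wedge's vertex, or it touches the two bounding rays at
three parametrically alternating points. -/
theorem lambda_property (γ : ℝ → ℂ)
    (hcont : ContinuousOn γ (Set.Icc 0 1))
    (hinj : Set.InjOn γ (Set.Icc 0 1))
    (hpoly : IsPiecewiseAffineOnUnitInterval γ)
    (θ : ℝ) (hθ0 : 0 < θ) (hθ : θ < Real.pi) :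
    ∃ (c u₁ u₂ : ℂ), ‖u₁‖ = 1 ∧ ‖u₂‖ = 1 ∧
      InnerProductGeometry.angle u₁ u₂ = Real.pi - θ ∧
      (∀ t ∈ Set.Icc (0 : ℝ) 1,
        0 ≤ ((starRingEnd ℂ) u₁ * (γ t - c)).re ∧
        0 ≤ ((starRingEnd ℂ) u₂ * (γ t - c)).re) ∧
      (c ∈ γ '' Set.Icc (0 : ℝ) 1 ∨
        ∃ t₁ t₂ t₃, t₁ ∈ Set.Icc (0 : ℝ) 1 ∧ t₂ ∈ Set.Icc (0 : ℝ) 1 ∧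
          t₃ ∈ Set.Icc (0 : ℝ) 1 ∧ t₁ < t₂ ∧ t₂ < t₃ ∧
          ((((starRingEnd ℂ) u₁ * (γ t₂ - c)).re = 0 ∧
            ((starRingEnd ℂ) u₂ * (γ t₁ - c)).re = 0 ∧
            ((starRingEnd ℂ) u₂ * (γ t₃ - c)).re = 0) ∨
           (((starRingEnd ℂ) u₂ * (γ t₂ - c)).re = 0 ∧
            ((starRingEnd ℂ) u₁ * (γ t₁ - c)).re = 0 ∧
            ((starRingEnd ℂ) u₁ * (γ t₃ - c)).re = 0))) := by
  obtain ⟨n, T, hT, hT0, hT1, hseg⟩ := hpoly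
  have hα0 : 0 < Real.pi - θ := by linarith
  have hαπ : Real.pi - θ < Real.pi := by linarith
  have hsin : 0 < Real.sin (Real.pi - θ) := Real.sin_pos_of_pos_of_lt_pi hα0 hαπ
  obtain ⟨φ, hφ⟩ := LambdaAux.key_claim hcont hT hT0 hT1 hseg (Real.pi - θ)
  set α := Real.pi - θ with hαdef
  set h₁ := LambdaAux.hmin γ φ with hh₁
  set h₂ := LambdaAux.hmin γ (φ + α) with hh₂
  set qq := (Real.cos α * h₂ - h₁) / Real.sin α with hqq
  set cc : ℂ := LambdaAux.v (φ + α) * ((h₂ : ℂ) + Complex.I * (qq : ℝ)) with hcc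
  have hconj2 : (starRingEnd ℂ) (LambdaAux.v (φ + α)) * LambdaAux.v (φ + α) = 1 := by
    rw [LambdaAux.conj_v_mul_v, sub_self, LambdaAux.v_zero]
  have hq : Real.sin α * qq = Real.cos α * h₂ - h₁ := by
    rw [hqq]; field_simp
  have hc2re : ((starRingEnd ℂ) (LambdaAux.v (φ + α)) * cc).re = h₂ := by
    rw [hcc, show (starRingEnd ℂ) (LambdaAux.v (φ + α)) *
        (LambdaAux.v (φ + α) * ((h₂ : ℂ) + Complex.I * (qq : ℝ))) =
        ((starRingEnd ℂ) (LambdaAux.v (φ + α)) * LambdaAux.v (φ + α)) *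
        ((h₂ : ℂ) + Complex.I * (qq : ℝ)) by ring, hconj2, one_mul]
    simp
  have hc1re : ((starRingEnd ℂ) (LambdaAux.v φ) * cc).re = h₁ := by
    rw [hcc, show (starRingEnd ℂ) (LambdaAux.v φ) *
        (LambdaAux.v (φ + α) * ((h₂ : ℂ) + Complex.I * (qq : ℝ))) =
        ((starRingEnd ℂ) (LambdaAux.v φ) * LambdaAux.v (φ + α)) *
        ((h₂ : ℂ) + Complex.I * (qq : ℝ)) by ring,
      LambdaAux.conj_v_mul_v, show φ + α - φ = α by ring, Complex.mul_re]
    simp only [LambdaAux.v_re, LambdaAux.v_im, Complex.add_re, Complex.add_im,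
      Complex.ofReal_re, Complex.ofReal_im, Complex.mul_re, Complex.mul_im,
      Complex.I_re, Complex.I_im]
    ring_nf
    ring_nf at hq
    linarith [hq]
  have hFdiff : ∀ ψ t : ℝ, ((starRingEnd ℂ) (LambdaAux.v ψ) * (γ t - cc)).re
      = LambdaAux.F γ ψ t - ((starRingEnd ℂ) (LambdaAux.v ψ) * cc).re := by
    intro ψ t
    rw [mul_sub, Complex.sub_re]
    rfl
  refine ⟨cc, LambdaAux.v φ, LambdaAux.v (φ + α),
    LambdaAux.abs_v φ, LambdaAux.abs_v _, ?_, ?_, ?_⟩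
  · -- angle
    have hin : (inner ℝ (LambdaAux.v φ) (LambdaAux.v (φ + α)) : ℝ) = Real.cos α := by
      rw [Complex.inner, mul_comm, LambdaAux.conj_v_mul_v,
        show φ + α - φ = α by ring, LambdaAux.v_re]
    rw [InnerProductGeometry.angle, hin,
      LambdaAux.abs_v, LambdaAux.abs_v]
    norm_num
    exact Real.arccos_cos hα0.le hαπ.le
  · -- containment
    intro t ht
    constructor
    · rw [hFdiff, hc1re]
      have := LambdaAux.hmin_le hcont φ ht
      rw [← hh₁] at this
      linarith
    · rw [hFdiff, hc2re]
      have := LambdaAux.hmin_le hcont (φ + α) ht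
      rw [← hh₂] at this
      linarith
  · -- disjunction
    rcases hφ with ⟨t, ht1, ht2⟩ | ⟨t₁, t₂, t₃, h12, h23, hpat⟩
    · left
      refine ⟨t, (LambdaAux.mem_A.mp ht1).1, ?_⟩
      have e1 : ((starRingEnd ℂ) (LambdaAux.v φ) * (γ t - cc)).re = 0 := by
        rw [hFdiff, (LambdaAux.mem_A.mp ht1).2, ← hh₁, hc1re, sub_self]
      have e2 : ((starRingEnd ℂ) (LambdaAux.v (φ + α)) * (γ t - cc)).re = 0 := by
        rw [hFdiff, (LambdaAux.mem_A.mp ht2).2, ← hh₂, hc2re, sub_self]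
      have e2' : ((starRingEnd ℂ) (LambdaAux.v α) *
          ((starRingEnd ℂ) (LambdaAux.v φ) * (γ t - cc))).re = 0 := by
        rw [show (starRingEnd ℂ) (LambdaAux.v α) *
            ((starRingEnd ℂ) (LambdaAux.v φ) * (γ t - cc)) =
            (starRingEnd ℂ) (LambdaAux.v φ * LambdaAux.v α) * (γ t - cc) by
          rw [map_mul]; ring, ← LambdaAux.v_add]
        exact e2
      rw [Complex.mul_re, Complex.conj_re, Complex.conj_im, LambdaAux.v_re,
        LambdaAux.v_im, e1, mul_zero, zero_sub, neg_mul, neg_neg] at e2'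
      have him : ((starRingEnd ℂ) (LambdaAux.v φ) * (γ t - cc)).im = 0 := by
        rcases mul_eq_zero.mp e2' with h | h
        · exact absurd h (ne_of_gt hsin)
        · exact h
      have hz0 : (starRingEnd ℂ) (LambdaAux.v φ) * (γ t - cc) = 0 :=
        Complex.ext e1 him
      have hu1ne : (starRingEnd ℂ) (LambdaAux.v φ) ≠ 0 := by
        intro h
        have habs := LambdaAux.abs_v φ
        rw [← Complex.norm_conj, h] at habs
        simp at habs
      have hw : γ t - cc = 0 := by
        rcases mul_eq_zero.mp hz0 with h | h
        · exact absurd h hu1ne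
        · exact h
      exact sub_eq_zero.mp hw
    · right
      rcases hpat with ⟨ha, hb, hc'⟩ | ⟨ha, hb, hc'⟩
      · refine ⟨t₁, t₂, t₃, (LambdaAux.mem_A.mp hb).1, (LambdaAux.mem_A.mp ha).1,
          (LambdaAux.mem_A.mp hc').1, h12, h23, Or.inl ⟨?_, ?_, ?_⟩⟩
        · rw [hFdiff, (LambdaAux.mem_A.mp ha).2, ← hh₁, hc1re, sub_self]
        · rw [hFdiff, (LambdaAux.mem_A.mp hb).2, ← hh₂, hc2re, sub_self]
        · rw [hFdiff, (LambdaAux.mem_A.mp hc').2, ← hh₂, hc2re, sub_self]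
      · refine ⟨t₁, t₂, t₃, (LambdaAux.mem_A.mp hb).1, (LambdaAux.mem_A.mp ha).1,
          (LambdaAux.mem_A.mp hc').1, h12, h23, Or.inr ⟨?_, ?_, ?_⟩⟩
        · rw [hFdiff, (LambdaAux.mem_A.mp ha).2, ← hh₂, hc2re, sub_self]
        · rw [hFdiff, (LambdaAux.mem_A.mp hb).2, ← hh₁, hc1re, sub_self]
        · rw [hFdiff, (LambdaAux.mem_A.mp hc').2, ← hh₁, hc1re, sub_self]
end

section
/- Let γ : [0,1] → ℂ be an injective continuous map that is piecewise affine with respect to some partition of [0,1]. Then there exist a unit vector u ∈ ℂ and real numbers a ≤ b with a ≤ Re(conj(u)·γ(t)) ≤ b for all t ∈ [0,1], together with parameters t₁ < t₂ < t₃ in [0,1] such that either Re(conj(u)·γ(t₁)) = Re(conj(u)·γ(t₃)) = a and Re(conj(u)·γ(t₂)) = b, or Re(conj(u)·γ(t₁)) = Re(conj(u)·γ(t₃)) = b and Re(conj(u)·γ(t₂)) = a. (That is, γ admits a pair of parallel support lines which it touches at three parametrically alternating points.) -/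
open Set

section Aux

/-- `s` is a minimizer of `g` on `[0,1]`. -/
def MinOn01 (g : ℝ → ℝ) (s : ℝ) : Prop :=
  s ∈ Set.Icc (0:ℝ) 1 ∧ ∀ t ∈ Set.Icc (0:ℝ) 1, g s ≤ g t

/-- `s` is a maximizer of `g` on `[0,1]`. -/
def MaxOn01 (g : ℝ → ℝ) (s : ℝ) : Prop :=
  s ∈ Set.Icc (0:ℝ) 1 ∧ ∀ t ∈ Set.Icc (0:ℝ) 1, g t ≤ g s

lemma abs_cos_sub_cos_le' (x y : ℝ) : |Real.cos x - Real.cos y| ≤ |x - y| := by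
  rw [Real.cos_sub_cos]
  have h1 : |Real.sin ((x + y) / 2)| ≤ 1 := Real.abs_sin_le_one _
  have h2 : |Real.sin ((x - y) / 2)| ≤ |(x - y) / 2| := Real.abs_sin_le_abs
  have h3 : |(x - y) / 2| = |x - y| / 2 := by rw [abs_div]; norm_num
  have h4 : (0:ℝ) ≤ |Real.sin ((x - y) / 2)| := abs_nonneg _
  calc |-2 * Real.sin ((x + y) / 2) * Real.sin ((x - y) / 2)|
      = 2 * |Real.sin ((x + y) / 2)| * |Real.sin ((x - y) / 2)| := by
        rw [abs_mul, abs_mul]; norm_num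
    _ ≤ |x - y| := by nlinarith [abs_nonneg (x - y)]

lemma abs_sin_sub_sin_le' (x y : ℝ) : |Real.sin x - Real.sin y| ≤ |x - y| := by
  rw [Real.sin_sub_sin]
  have h1 : |Real.cos ((x + y) / 2)| ≤ 1 := Real.abs_cos_le_one _
  have h2 : |Real.sin ((x - y) / 2)| ≤ |(x - y) / 2| := Real.abs_sin_le_abs
  have h3 : |(x - y) / 2| = |x - y| / 2 := by rw [abs_div]; norm_num
  have h4 : (0:ℝ) ≤ |Real.sin ((x - y) / 2)| := abs_nonneg _
  calc |2 * Real.sin ((x - y) / 2) * Real.cos ((x + y) / 2)|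
      = 2 * |Real.sin ((x - y) / 2)| * |Real.cos ((x + y) / 2)| := by
        rw [abs_mul, abs_mul]; norm_num
    _ ≤ |x - y| := by nlinarith [abs_nonneg (x - y)]

/-- Stability of "all minimizers strictly precede all maximizers" under perturbation of
the direction parameter, for a family `f θ` which is uniformly Lipschitz in `θ`. -/
lemma stable_left (f : ℝ → ℝ → ℝ) (C : ℝ) (hC : 0 ≤ C)
    (hfc : ∀ θ, ContinuousOn (f θ) (Set.Icc 0 1))
    (hlip : ∀ θ θ' t, t ∈ Set.Icc (0:ℝ) 1 → |f θ t - f θ' t| ≤ C * |θ - θ'|)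
    (θ₀ : ℝ)
    (hsep : ∀ s t, MinOn01 (f θ₀) s → MaxOn01 (f θ₀) t → s < t) :
    ∃ δ > 0, ∀ θ, |θ - θ₀| < δ →
      ∀ s t, MinOn01 (f θ) s → MaxOn01 (f θ) t → s < t := by
  have hK : IsCompact (Set.Icc (0:ℝ) 1) := isCompact_Icc
  have hKne : (Set.Icc (0:ℝ) 1).Nonempty := ⟨0, by norm_num⟩
  obtain ⟨s₀, hs₀K, hs₀'⟩ := hK.exists_isMinOn hKne (hfc θ₀)
  have hs₀ : ∀ x ∈ Set.Icc (0:ℝ) 1, f θ₀ s₀ ≤ f θ₀ x := isMinOn_iff.mp hs₀'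
  obtain ⟨t₀, ht₀K, ht₀'⟩ := hK.exists_isMaxOn hKne (hfc θ₀)
  have ht₀ : ∀ x ∈ Set.Icc (0:ℝ) 1, f θ₀ x ≤ f θ₀ t₀ := isMaxOn_iff.mp ht₀'
  set v := f θ₀ s₀ with hv
  set V := f θ₀ t₀ with hV
  -- minimizer and maximizer sets
  set ms : Set ℝ := Set.Icc 0 1 ∩ f θ₀ ⁻¹' Set.Iic v with hms
  set Ms : Set ℝ := Set.Icc 0 1 ∩ f θ₀ ⁻¹' Set.Ici V with hMs
  have hmsc : IsCompact ms :=
    hK.of_isClosed_subset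
      ((hfc θ₀).preimage_isClosed_of_isClosed isClosed_Icc isClosed_Iic)
      Set.inter_subset_left
  have hMsc : IsCompact Ms :=
    hK.of_isClosed_subset
      ((hfc θ₀).preimage_isClosed_of_isClosed isClosed_Icc isClosed_Ici)
      Set.inter_subset_left
  have hmin_iff : ∀ x, MinOn01 (f θ₀) x ↔ x ∈ ms := by
    intro x
    constructor
    · rintro ⟨hxK, hx⟩; exact ⟨hxK, hx s₀ hs₀K⟩
    · rintro ⟨hxK, hx⟩; exact ⟨hxK, fun t ht => le_trans hx (hs₀ t ht)⟩
  have hmax_iff : ∀ x, MaxOn01 (f θ₀) x ↔ x ∈ Ms := by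
    intro x
    constructor
    · rintro ⟨hxK, hx⟩; exact ⟨hxK, hx t₀ ht₀K⟩
    · rintro ⟨hxK, hx⟩; exact ⟨hxK, fun t ht => le_trans (ht₀ t ht) hx⟩
  have hpmem : sSup ms ∈ ms := hmsc.sSup_mem ⟨s₀, (hmin_iff s₀).1 ⟨hs₀K, hs₀⟩⟩
  have hqmem : sInf Ms ∈ Ms := hMsc.sInf_mem ⟨t₀, (hmax_iff t₀).1 ⟨ht₀K, ht₀⟩⟩
  set p := sSup ms with hp
  set q := sInf Ms with hq
  have hpq : p < q := hsep p q ((hmin_iff p).2 hpmem) ((hmax_iff q).2 hqmem)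
  set c := (p + q) / 2 with hc
  have hpc : p < c := by rw [hc]; linarith
  have hcq : c < q := by rw [hc]; linarith
  -- right part: f θ₀ bounded away from v on [c,1]
  have hKRc : IsCompact (Set.Icc (0:ℝ) 1 ∩ Set.Ici c) := hK.inter_right isClosed_Ici
  have hKRne : (Set.Icc (0:ℝ) 1 ∩ Set.Ici c).Nonempty := ⟨q, hqmem.1, le_of_lt hcq⟩
  obtain ⟨w, hwK, hw'⟩ := hKRc.exists_isMinOn hKRne ((hfc θ₀).mono Set.inter_subset_left)
  have hw : ∀ x ∈ Set.Icc (0:ℝ) 1 ∩ Set.Ici c, f θ₀ w ≤ f θ₀ x := isMinOn_iff.mp hw'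
  have hδ₁ : v < f θ₀ w := by
    rcases lt_or_eq_of_le (hs₀ w hwK.1) with h | h
    · exact h
    · exfalso
      have hwms : w ∈ ms := ⟨hwK.1, by simp [← h]⟩
      have : w ≤ p := le_csSup hmsc.bddAbove hwms
      have : c ≤ w := hwK.2
      linarith
  -- left part: f θ₀ bounded away from V on [0,c]
  have hKLc : IsCompact (Set.Icc (0:ℝ) 1 ∩ Set.Iic c) := hK.inter_right isClosed_Iic
  have hKLne : (Set.Icc (0:ℝ) 1 ∩ Set.Iic c).Nonempty := ⟨p, hpmem.1, le_of_lt hpc⟩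
  obtain ⟨w', hw'K, hw''⟩ := hKLc.exists_isMaxOn hKLne ((hfc θ₀).mono Set.inter_subset_left)
  have hw' : ∀ x ∈ Set.Icc (0:ℝ) 1 ∩ Set.Iic c, f θ₀ x ≤ f θ₀ w' := isMaxOn_iff.mp hw''
  have hδ₂ : f θ₀ w' < V := by
    rcases lt_or_eq_of_le (ht₀ w' hw'K.1) with h | h
    · exact h
    · exfalso
      have hwMs : w' ∈ Ms := ⟨hw'K.1, by simp [h]⟩
      have : q ≤ w' := csInf_le hMsc.bddBelow hwMs
      have : w' ≤ c := hw'K.2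
      linarith
  set ε := min (f θ₀ w - v) (V - f θ₀ w') with hε
  have hεpos : 0 < ε := lt_min (by linarith) (by linarith)
  refine ⟨ε / (2 * (C + 1)), by positivity, ?_⟩
  intro θ hθ s t hmins hmaxt
  have hbd : ∀ x ∈ Set.Icc (0:ℝ) 1, |f θ x - f θ₀ x| < ε / 2 := by
    intro x hx
    have h1 := hlip θ θ₀ x hx
    have h2 : C * |θ - θ₀| < ε / 2 := by
      have hC1 : 0 < C + 1 := by linarith
      have : C * |θ - θ₀| ≤ C * (ε / (2 * (C + 1))) :=
        mul_le_mul_of_nonneg_left (le_of_lt hθ) hC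
      have h3 : C * (ε / (2 * (C + 1))) < ε / 2 := by
        have hne : (2 * (C + 1)) ≠ 0 := by positivity
        rw [mul_div_assoc', div_lt_div_iff₀ (by positivity) (by norm_num : (0:ℝ) < 2)]
        nlinarith
      linarith
    linarith
  have hsc : s < c := by
    by_contra hsc
    push_neg at hsc
    have hsK := hmins.1
    have h1 : v + ε ≤ f θ₀ s := by
      have := hw s ⟨hsK, hsc⟩
      have : ε ≤ f θ₀ w - v := min_le_left _ _
      linarith [hw s ⟨hsK, hsc⟩]
    have h2 := hbd s hsK
    have h3 := hbd p hpmem.1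
    have h4 : f θ₀ p ≤ v := hpmem.2
    have h5 : f θ s ≤ f θ p := hmins.2 p hpmem.1
    have h6 : |f θ s - f θ₀ s| < ε / 2 := h2
    have h7 : |f θ p - f θ₀ p| < ε / 2 := h3
    rw [abs_lt] at h6 h7
    linarith
  have hct : c < t := by
    by_contra hct
    push_neg at hct
    have htK := hmaxt.1
    have h1 : f θ₀ t ≤ V - ε := by
      have := hw' t ⟨htK, hct⟩
      have : ε ≤ V - f θ₀ w' := min_le_right _ _
      linarith [hw' t ⟨htK, hct⟩]
    have h2 := hbd t htK
    have h3 := hbd q hqmem.1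
    have h4 : V ≤ f θ₀ q := hqmem.2
    have h5 : f θ q ≤ f θ t := hmaxt.2 q hqmem.1
    rw [abs_lt] at h2 h3
    linarith
  linarith

end Aux
/-- If for every direction the min- and max- sets of a continuous family were
parametrically separated, local constancy of the separation order on the connected
line of directions contradicts its antipodal antisymmetry. Hence some direction
admits alternating extremizers. -/
lemma key_alternating (f : ℝ → ℝ → ℝ) (C : ℝ) (hC : 0 ≤ C)
    (hfc : ∀ θ, ContinuousOn (f θ) (Set.Icc 0 1))
    (hlip : ∀ θ θ' t, t ∈ Set.Icc (0:ℝ) 1 → |f θ t - f θ' t| ≤ C * |θ - θ'|)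
    (hanti : ∀ θ t, f (θ + Real.pi) t = - f θ t)
    (hnc : ∀ θ, ∃ t ∈ Set.Icc (0:ℝ) 1, f θ t ≠ f θ 0) :
    ∃ θ t₁ t₂ t₃, t₁ ∈ Set.Icc (0:ℝ) 1 ∧ t₂ ∈ Set.Icc (0:ℝ) 1 ∧ t₃ ∈ Set.Icc (0:ℝ) 1 ∧
      t₁ < t₂ ∧ t₂ < t₃ ∧
      ((MinOn01 (f θ) t₁ ∧ MinOn01 (f θ) t₃ ∧ MaxOn01 (f θ) t₂) ∨
       (MaxOn01 (f θ) t₁ ∧ MaxOn01 (f θ) t₃ ∧ MinOn01 (f θ) t₂)) := by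
  by_contra hcon
  push_neg at hcon
  have hK : IsCompact (Set.Icc (0:ℝ) 1) := isCompact_Icc
  have hKne : (Set.Icc (0:ℝ) 1).Nonempty := ⟨0, by norm_num⟩
  have h0K : (0:ℝ) ∈ Set.Icc (0:ℝ) 1 := by norm_num
  -- minima are strictly below maxima (nonconstancy)
  have hvV : ∀ θ s t, MinOn01 (f θ) s → MaxOn01 (f θ) t → f θ s < f θ t := by
    intro θ s t hs ht
    rcases lt_or_eq_of_le (le_trans (hs.2 t ht.1) (le_refl _)) with h | h
    · exact h
    · exfalso
      obtain ⟨t', ht'K, ht'⟩ := hnc θ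
      have h1 : f θ s ≤ f θ t' := hs.2 t' ht'K
      have h2 : f θ t' ≤ f θ t := ht.2 t' ht'K
      have h3 : f θ s ≤ f θ 0 := hs.2 0 h0K
      have h4 : f θ 0 ≤ f θ t := ht.2 0 h0K
      apply ht'
      rw [← h] at h2 h4
      linarith
  -- every direction is separated, one way or the other
  have hsep_all : ∀ θ, (∀ s t, MinOn01 (f θ) s → MaxOn01 (f θ) t → s < t) ∨
      (∀ s t, MinOn01 (f θ) s → MaxOn01 (f θ) t → t < s) := by
    intro θ
    by_contra h
    push_neg at h
    obtain ⟨⟨s, t, hs, ht, hts⟩, ⟨s', t', hs', ht', hst⟩⟩ := h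
    -- hts : t ≤ s ; hst : s' ≤ t'
    have h1 : t < s := lt_of_le_of_ne hts (fun e => absurd (e ▸ hvV θ s t hs ht) (lt_irrefl _))
    have h2 : s' < t' := lt_of_le_of_ne hst (fun e => by
      have := hvV θ s' t' hs' ht'; rw [e] at this; exact lt_irrefl _ this)
    rcases lt_or_ge s' t with h3 | h3
    · -- s' < t < s : min, max, min
      exact (hcon θ s' t s hs'.1 ht.1 hs.1 h3 h1).1 hs' hs ht
    · -- t ≤ s', t ≠ s' so t < s' < t' : max, min, max
      have h4 : t < s' := lt_of_le_of_ne h3 (fun e => by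
        have := hvV θ s' t hs' ht; rw [e] at this; exact lt_irrefl _ this)
      exact (hcon θ t s' t' ht.1 hs'.1 ht'.1 h4 h2).2 ht ht' hs'
  -- swapping under antipode
  have hswap_min : ∀ θ s, MinOn01 (f (θ + Real.pi)) s ↔ MaxOn01 (f θ) s := by
    intro θ s
    unfold MinOn01 MaxOn01
    simp only [hanti, neg_le_neg_iff]
  have hswap_max : ∀ θ s, MaxOn01 (f (θ + Real.pi)) s ↔ MinOn01 (f θ) s := by
    intro θ s
    unfold MinOn01 MaxOn01
    simp only [hanti, neg_le_neg_iff]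
  -- the set of "left-separated" directions
  set E : Set ℝ := {θ | ∀ s t, MinOn01 (f θ) s → MaxOn01 (f θ) t → s < t} with hE
  have hnotboth : ∀ θ, θ ∈ E → (∀ s t, MinOn01 (f θ) s → MaxOn01 (f θ) t → t < s) → False := by
    intro θ h1 h2
    obtain ⟨s₀, hs₀K, hs₀'⟩ := hK.exists_isMinOn hKne (hfc θ)
    obtain ⟨t₀, ht₀K, ht₀'⟩ := hK.exists_isMaxOn hKne (hfc θ)
    have hmin : MinOn01 (f θ) s₀ := ⟨hs₀K, isMinOn_iff.mp hs₀'⟩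
    have hmax : MaxOn01 (f θ) t₀ := ⟨ht₀K, isMaxOn_iff.mp ht₀'⟩
    have := h1 s₀ t₀ hmin hmax
    have := h2 s₀ t₀ hmin hmax
    linarith
  have hopenE : IsOpen E := by
    rw [Metric.isOpen_iff]
    intro θ₀ hθ₀
    obtain ⟨δ, hδ, hδ'⟩ := stable_left f C hC hfc hlip θ₀ hθ₀
    refine ⟨δ, hδ, fun θ hθ => hδ' θ ?_⟩
    rw [← Real.dist_eq]
    exact Metric.mem_ball.mp hθ
  have hopenEc : IsOpen Eᶜ := by
    rw [Metric.isOpen_iff]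
    intro θ₀ hθ₀
    have hright : ∀ s t, MinOn01 (f θ₀) s → MaxOn01 (f θ₀) t → t < s := by
      rcases hsep_all θ₀ with h | h
      · exact absurd h hθ₀
      · exact h
    -- left separation at θ₀ + π
    have hleft : ∀ s t, MinOn01 (f (θ₀ + Real.pi)) s → MaxOn01 (f (θ₀ + Real.pi)) t → s < t := by
      intro s t hs ht
      exact hright t s ((hswap_max _ _).mp ht) ((hswap_min _ _).mp hs)
    obtain ⟨δ, hδ, hδ'⟩ := stable_left f C hC hfc hlip (θ₀ + Real.pi) hleft
    refine ⟨δ, hδ, fun θ hθ => ?_⟩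
    have hθd : |θ - θ₀| < δ := by rw [← Real.dist_eq]; exact Metric.mem_ball.mp hθ
    intro hθE
    have hl : ∀ s t, MinOn01 (f (θ + Real.pi)) s → MaxOn01 (f (θ + Real.pi)) t → s < t :=
      hδ' (θ + Real.pi) (by rw [add_sub_add_right_eq_sub]; exact hθd)
    have hr : ∀ s t, MinOn01 (f θ) s → MaxOn01 (f θ) t → t < s := by
      intro s t hs ht
      exact hl t s ((hswap_min _ _).mpr ht) ((hswap_max _ _).mpr hs)
    exact hnotboth θ hθE hr
  have hclopen : IsClopen E := ⟨isOpen_compl_iff.mp hopenEc, hopenE⟩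
  rcases isClopen_iff.mp hclopen with h | h
  · -- E empty: but some θ or θ+π is in E
    rcases hsep_all 0 with h0 | h0
    · have : (0:ℝ) ∈ E := h0
      rw [h] at this; exact this
    · have hm := hswap_min 0
      have hM := hswap_max 0
      simp only [zero_add] at hm hM
      have : Real.pi ∈ E := by
        intro s t hs ht
        exact h0 t s ((hM t).mp ht) ((hm s).mp hs)
      rw [h] at this; exact this
  · -- E = univ : both θ₀ and θ₀ + π left-separated, contradiction
    have h1 : (0:ℝ) ∈ E := h ▸ Set.mem_univ _
    have h2 : Real.pi ∈ E := h ▸ Set.mem_univ _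
    have hm := hswap_min 0
    have hM := hswap_max 0
    simp only [zero_add] at hm hM
    apply hnotboth 0 h1
    intro s t hs ht
    exact h2 t s ((hm t).mpr ht) ((hM s).mpr hs)

/-- **Parallel lambda property.** Every simple polygonal arc admits a pair of parallel
support lines (in direction given by a unit normal `u`, at levels `a ≤ b`) which it
touches at three parametrically alternating points. -/
theorem parallel_lambda_property (γ : ℝ → ℂ)
    (hcont : ContinuousOn γ (Set.Icc 0 1))
    (hinj : Set.InjOn γ (Set.Icc 0 1))
    (hpoly : IsPiecewiseAffineOnUnitInterval γ) :
    ∃ (u : ℂ) (a b : ℝ), ‖u‖ = 1 ∧ a ≤ b ∧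
      (∀ t ∈ Set.Icc (0 : ℝ) 1,
        a ≤ ((starRingEnd ℂ) u * γ t).re ∧ ((starRingEnd ℂ) u * γ t).re ≤ b) ∧
      ∃ t₁ t₂ t₃, t₁ ∈ Set.Icc (0 : ℝ) 1 ∧ t₂ ∈ Set.Icc (0 : ℝ) 1 ∧
        t₃ ∈ Set.Icc (0 : ℝ) 1 ∧ t₁ < t₂ ∧ t₂ < t₃ ∧
        ((((starRingEnd ℂ) u * γ t₁).re = a ∧ ((starRingEnd ℂ) u * γ t₃).re = a ∧
          ((starRingEnd ℂ) u * γ t₂).re = b) ∨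
         (((starRingEnd ℂ) u * γ t₁).re = b ∧ ((starRingEnd ℂ) u * γ t₃).re = b ∧
          ((starRingEnd ℂ) u * γ t₂).re = a)) := by
  -- the support function family
  set f : ℝ → ℝ → ℝ := fun θ t => Real.cos θ * (γ t).re + Real.sin θ * (γ t).im with hf
  have hfeq : ∀ (θ t : ℝ), ((starRingEnd ℂ) (Complex.exp ((θ:ℂ) * Complex.I)) * γ t).re = f θ t := by
    intro θ t
    simp only [hf, Complex.mul_re, Complex.conj_re, Complex.conj_im,
      Complex.exp_ofReal_mul_I_re, Complex.exp_ofReal_mul_I_im]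
    ring
  have hfc : ∀ θ, ContinuousOn (f θ) (Set.Icc 0 1) := by
    intro θ
    exact ((continuousOn_const).mul (Complex.continuous_re.comp_continuousOn hcont)).add
      ((continuousOn_const).mul (Complex.continuous_im.comp_continuousOn hcont))
  have hanti : ∀ θ t, f (θ + Real.pi) t = - f θ t := by
    intro θ t
    simp [hf, Real.cos_add_pi, Real.sin_add_pi]
    ring
  by_cases hconst : ∃ θ : ℝ, ∀ t ∈ Set.Icc (0:ℝ) 1, f θ t = f θ 0
  · -- degenerate case: γ lies on a line; both support lines coincide
    obtain ⟨θ, hθ⟩ := hconst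
    refine ⟨Complex.exp ((θ:ℂ) * Complex.I), f θ 0, f θ 0,
      Complex.norm_exp_ofReal_mul_I θ, le_refl _, ?_, ?_⟩
    · intro t ht
      rw [hfeq, hθ t ht]
      exact ⟨le_refl _, le_refl _⟩
    · refine ⟨0, 1/2, 1, by norm_num, by norm_num, by norm_num, by norm_num, by norm_num, ?_⟩
      left
      rw [hfeq, hfeq, hfeq, hθ 0 (by norm_num), hθ (1/2) (by norm_num), hθ 1 (by norm_num)]
      exact ⟨rfl, rfl, rfl⟩
  · push_neg at hconst
    -- Lipschitz bound in θ
    obtain ⟨B, hB⟩ := isCompact_Icc.exists_bound_of_continuousOn hcont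
    have hB0 : 0 ≤ B := le_trans (norm_nonneg _) (hB 0 (by norm_num))
    have hlip : ∀ θ θ' t, t ∈ Set.Icc (0:ℝ) 1 → |f θ t - f θ' t| ≤ (2*B) * |θ - θ'| := by
      intro θ θ' t ht
      have hre : |(γ t).re| ≤ B := le_trans (Complex.abs_re_le_norm _) (hB t ht)
      have him : |(γ t).im| ≤ B := le_trans (Complex.abs_im_le_norm _) (hB t ht)
      have h1 : |Real.cos θ - Real.cos θ'| ≤ |θ - θ'| := abs_cos_sub_cos_le' θ θ'
      have h2 : |Real.sin θ - Real.sin θ'| ≤ |θ - θ'| := abs_sin_sub_sin_le' θ θ'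
      have e : f θ t - f θ' t
          = (Real.cos θ - Real.cos θ') * (γ t).re + (Real.sin θ - Real.sin θ') * (γ t).im := by
        simp [hf]; ring
      rw [e]
      calc |(Real.cos θ - Real.cos θ') * (γ t).re + (Real.sin θ - Real.sin θ') * (γ t).im|
          ≤ |(Real.cos θ - Real.cos θ') * (γ t).re| + |(Real.sin θ - Real.sin θ') * (γ t).im| :=
            abs_add_le _ _
        _ = |Real.cos θ - Real.cos θ'| * |(γ t).re| + |Real.sin θ - Real.sin θ'| * |(γ t).im| := by
            rw [abs_mul, abs_mul]
        _ ≤ (2*B) * |θ - θ'| := by nlinarith [abs_nonneg (θ - θ'), abs_nonneg (Real.cos θ - Real.cos θ'), abs_nonneg (Real.sin θ - Real.sin θ'), abs_nonneg (γ t).re, abs_nonneg (γ t).im]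
    obtain ⟨θ, t₁, t₂, t₃, h₁, h₂, h₃, h₁₂, h₂₃, hpat⟩ :=
      key_alternating f (2*B) (by linarith) hfc hlip hanti hconst
    refine ⟨Complex.exp ((θ:ℂ) * Complex.I), ?_⟩
    rcases hpat with ⟨hm₁, hm₃, hM₂⟩ | ⟨hM₁, hM₃, hm₂⟩
    · refine ⟨f θ t₁, f θ t₂, Complex.norm_exp_ofReal_mul_I θ, hm₁.2 t₂ h₂, ?_, ?_⟩
      · intro t ht
        rw [hfeq]
        exact ⟨hm₁.2 t ht, hM₂.2 t ht⟩
      · refine ⟨t₁, t₂, t₃, h₁, h₂, h₃, h₁₂, h₂₃, Or.inl ⟨?_, ?_, ?_⟩⟩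
        · rw [hfeq]
        · rw [hfeq]
          exact le_antisymm (hm₃.2 t₁ h₁) (hm₁.2 t₃ h₃)
        · rw [hfeq]
    · refine ⟨f θ t₂, f θ t₁, Complex.norm_exp_ofReal_mul_I θ, hm₂.2 t₁ h₁, ?_, ?_⟩
      · intro t ht
        rw [hfeq]
        exact ⟨hm₂.2 t ht, hM₁.2 t ht⟩
      · refine ⟨t₁, t₂, t₃, h₁, h₂, h₃, h₁₂, h₂₃, Or.inr ⟨?_, ?_, ?_⟩⟩
        · rw [hfeq]
        · rw [hfeq]
          exact le_antisymm (hM₁.2 t₃ h₃) (hM₃.2 t₁ h₁)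
        · rw [hfeq]
end
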